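/- arXiv:1411.7819 — 7 statements merged into one kernel-verified Lean document; each statement's English description precedes it below -/
import Mathlib

section
/- Let P be a set of k ≥ 2 points in the unit square [0,1]² with the Euclidean metric. Then the gap ratio of P satisfies GR_P ≥ 2/√3 − C/√k, where C = 2^{3/2}/3^{3/4}. -/
open Metric

/-- Minimum gap of a point set `P`: half the least pairwise distance. -/
noncomputable def minGap {E : Type*} [MetricSpace E] (P : Set E) : ℝ :=
  sInf {d : ℝ | ∃ p ∈ P, ∃ q ∈ P, p ≠ q ∧ d = dist p q} / 2

/-- Maximum gap of `P` over the space `X`: the covering radius of `P` in `X`. -/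
noncomputable def maxGap {E : Type*} [MetricSpace E] (X P : Set E) : ℝ :=
  sSup ((fun q => Metric.infDist q P) '' X)

/-- Gap ratio of `P` over the space `X`. -/
noncomputable def gapRatio {E : Type*} [MetricSpace E] (X P : Set E) : ℝ :=
  maxGap X P / minGap P

/-- The unit square in the Euclidean plane. -/
def unitSquare : Set (EuclideanSpace ℝ (Fin 2)) :=
  {x | ∀ i, x i ∈ Set.Icc (0:ℝ) 1}

open RealInnerProductSpace

local notation "E2" => EuclideanSpace ℝ (Fin 2)


lemma le_infDist' {s : Set E2} {x : E2} {b : ℝ} (hs : s.Nonempty)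
    (h : ∀ y ∈ s, b ≤ dist x y) : b ≤ infDist x s :=
  le_of_not_gt fun hl => by
    obtain ⟨y, hy, hd⟩ := (infDist_lt_iff hs).1 hl
    exact (h y hy).not_gt hd

lemma abs_coord_le_dist (x y : E2) (i : Fin 2) : |x i - y i| ≤ dist x y := by
  rw [EuclideanSpace.dist_eq]
  rw [show |x i - y i| = Real.sqrt ((x i - y i)^2) from (Real.sqrt_sq_eq_abs _).symm]
  apply Real.sqrt_le_sqrt
  have h := Finset.single_le_sum (f := fun j => dist (x j) (y j) ^ 2)
    (fun j _ => sq_nonneg _) (Finset.mem_univ i)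
  simpa [Real.dist_eq, sq_abs] using h

lemma dist_le_two {x y : E2} (hx : x ∈ {z : E2 | ∀ i, z i ∈ Set.Icc (0:ℝ) 1})
    (hy : y ∈ {z : E2 | ∀ i, z i ∈ Set.Icc (0:ℝ) 1}) : dist x y ≤ 2 := by
  rw [EuclideanSpace.dist_eq, Fin.sum_univ_two]
  have h0 := hx 0; have h1 := hx 1; have g0 := hy 0; have g1 := hy 1
  simp only [Set.mem_Icc] at h0 h1 g0 g1
  have e0 : dist (x 0) (y 0) ^ 2 ≤ 1 := by rw [Real.dist_eq, sq_abs]; nlinarith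
  have e1 : dist (x 1) (y 1) ^ 2 ≤ 1 := by rw [Real.dist_eq, sq_abs]; nlinarith
  have h2 : Real.sqrt (dist (x 0) (y 0) ^ 2 + dist (x 1) (y 1) ^ 2) ≤ Real.sqrt 2 :=
    Real.sqrt_le_sqrt (by linarith)
  have h3 : Real.sqrt 2 ≤ 2 := by
    nlinarith [Real.sq_sqrt (show (0:ℝ) ≤ 2 by norm_num), Real.sqrt_nonneg 2]
  linarith

lemma three_on_sphere {v a b c : E2} {d r : ℝ}
    (ha : dist v a = d) (hb : dist v b = d) (hc : dist v c = d)
    (hab : 2*r ≤ dist a b) (hac : 2*r ≤ dist a c) (hbc : 2*r ≤ dist b c)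
    (hr : 0 ≤ r) : 4*r^2 ≤ 3*d^2 := by
  have n1 : ‖a - v‖ = d := by rw [← ha, dist_comm, dist_eq_norm]
  have n2 : ‖b - v‖ = d := by rw [← hb, dist_comm, dist_eq_norm]
  have n3 : ‖c - v‖ = d := by rw [← hc, dist_comm, dist_eq_norm]
  have dab : dist a b = ‖(a - v) - (b - v)‖ := by rw [dist_eq_norm, sub_sub_sub_cancel_right]
  have dac : dist a c = ‖(a - v) - (c - v)‖ := by rw [dist_eq_norm, sub_sub_sub_cancel_right]
  have dbc : dist b c = ‖(b - v) - (c - v)‖ := by rw [dist_eq_norm, sub_sub_sub_cancel_right]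
  have e12 : ‖(a - v) - (b - v)‖^2 = d^2 - 2 * ⟪a - v, b - v⟫ + d^2 := by
    rw [norm_sub_sq_real, n1, n2]
  have e13 : ‖(a - v) - (c - v)‖^2 = d^2 - 2 * ⟪a - v, c - v⟫ + d^2 := by
    rw [norm_sub_sq_real, n1, n3]
  have e23 : ‖(b - v) - (c - v)‖^2 = d^2 - 2 * ⟪b - v, c - v⟫ + d^2 := by
    rw [norm_sub_sq_real, n2, n3]
  have hsum : 0 ≤ ‖(a - v) + (b - v) + (c - v)‖^2 := sq_nonneg _
  have expand : ‖(a - v) + (b - v) + (c - v)‖^2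
      = d^2 + d^2 + d^2 + 2*⟪a - v, b - v⟫ + 2*⟪a - v, c - v⟫ + 2*⟪b - v, c - v⟫ := by
    rw [norm_add_sq_real, norm_add_sq_real, inner_add_left, n1, n2, n3]; ring
  have s12 : 4*r^2 ≤ ‖(a - v) - (b - v)‖^2 := by
    rw [show (4:ℝ)*r^2 = (2*r)^2 by ring]
    exact pow_le_pow_left₀ (by linarith) (dab ▸ hab) 2
  have s13 : 4*r^2 ≤ ‖(a - v) - (c - v)‖^2 := by
    rw [show (4:ℝ)*r^2 = (2*r)^2 by ring]
    exact pow_le_pow_left₀ (by linarith) (dac ▸ hac) 2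
  have s23 : 4*r^2 ≤ ‖(b - v) - (c - v)‖^2 := by
    rw [show (4:ℝ)*r^2 = (2*r)^2 by ring]
    exact pow_le_pow_left₀ (by linarith) (dbc ▸ hbc) 2
  rw [expand] at hsum
  rw [e12] at s12; rw [e13] at s13; rw [e23] at s23
  linarith

-- helper : a ≤ b from squares
lemma le_of_sq_le_sq' {a b : ℝ} (hb : 0 ≤ b) (h : a^2 ≤ b^2) : a ≤ b :=
  le_of_pow_le_pow_left₀ (by norm_num) hb h

-- the cell map into Fin 8
noncomputable def cell8 (t : ℝ) : Fin 8 :=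
  ⟨min 7 ⌊8*t⌋₊, by have := min_le_left 7 ⌊8*t⌋₊; omega⟩

lemma cell8_bounds {t : ℝ} (h0 : 0 ≤ t) (h1 : t ≤ 1) :
    ((cell8 t : ℕ) : ℝ)/8 ≤ t ∧ t ≤ (((cell8 t : ℕ) : ℝ) + 1)/8 := by
  have h8t : (0:ℝ) ≤ 8*t := by linarith
  by_cases h : ⌊8*t⌋₊ ≤ 7
  · have hc0 : (cell8 t : ℕ) = min 7 ⌊8*t⌋₊ := rfl
    rw [hc0, min_eq_right h]
    constructor
    · have := Nat.floor_le h8t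
      linarith
    · have := Nat.lt_floor_add_one (8*t)
      push_cast at this ⊢
      linarith
  · have hc0 : (cell8 t : ℕ) = min 7 ⌊8*t⌋₊ := rfl
    rw [hc0, min_eq_left (not_le.mp h).le]
    have hge : (8:ℝ) ≤ ↑⌊8*t⌋₊ := by exact_mod_cast Nat.succ_le_of_lt (not_le.mp h)
    have hfl := Nat.floor_le h8t
    constructor
    · push_cast; linarith
    · push_cast; linarith

lemma same_cell_close {s t : ℝ} (hs0 : 0 ≤ s) (hs1 : s ≤ 1) (ht0 : 0 ≤ t) (ht1 : t ≤ 1)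
    (h : cell8 s = cell8 t) : (s - t)^2 ≤ 1/64 := by
  obtain ⟨a1, a2⟩ := cell8_bounds hs0 hs1
  obtain ⟨b1, b2⟩ := cell8_bounds ht0 ht1
  rw [h] at a1 a2
  nlinarith

lemma small_gap (P : Set E2) (hfin : P.Finite) (hsub : P ⊆ unitSquare) (hk : 65 ≤ P.ncard) :
    ∃ p ∈ P, ∃ q ∈ P, p ≠ q ∧ (dist p q)^2 ≤ 1/32 := by
  classical
  have hcard : (Finset.univ : Finset (Fin 8 × Fin 8)).card < hfin.toFinset.card := by
    rw [← Set.ncard_eq_toFinset_card P hfin]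
    simp only [Finset.card_univ, Fintype.card_prod, Fintype.card_fin]
    omega
  obtain ⟨p, hp, q, hq, hpq, hfeq⟩ := Finset.exists_ne_map_eq_of_card_lt_of_maps_to hcard
    (f := fun x : E2 => (cell8 (x 0), cell8 (x 1))) (fun x _ => Finset.mem_univ _)
  rw [Set.Finite.mem_toFinset] at hp hq
  refine ⟨p, hp, q, hq, hpq, ?_⟩
  have hps := hsub hp; have hqs := hsub hq
  have h0 : (p 0 - q 0)^2 ≤ 1/64 :=
    same_cell_close (hps 0).1 (hps 0).2 (hqs 0).1 (hqs 0).2 (congrArg Prod.fst hfeq)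
  have h1 : (p 1 - q 1)^2 ≤ 1/64 :=
    same_cell_close (hps 1).1 (hps 1).2 (hqs 1).1 (hqs 1).2 (congrArg Prod.snd hfeq)
  rw [EuclideanSpace.dist_eq, Real.sq_sqrt (by positivity), Fin.sum_univ_two]
  rw [Real.dist_eq, Real.dist_eq, sq_abs, sq_abs]
  linarith

lemma key64 {k : ℕ} (hk2 : 2 ≤ k) (hk64 : k ≤ 64) :
    2 / Real.sqrt 3 - ((2:ℝ) ^ ((3:ℝ)/2) / (3:ℝ) ^ ((3:ℝ)/4)) / Real.sqrt k ≤ 1 := by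
  set s := Real.sqrt 3 with hsdef
  set c2 := (2:ℝ) ^ ((3:ℝ)/2) with hc2def
  set c3 := (3:ℝ) ^ ((3:ℝ)/4) with hc3def
  have hs_pos : 0 < s := Real.sqrt_pos.2 (by norm_num)
  have hs_sq : s^2 = 3 := Real.sq_sqrt (by norm_num)
  have hc2_pos : 0 < c2 := Real.rpow_pos_of_pos (by norm_num) _
  have hc3_pos : 0 < c3 := Real.rpow_pos_of_pos (by norm_num) _
  have hc2_sq : c2^2 = 8 := by
    rw [hc2def, ← Real.rpow_natCast ((2:ℝ) ^ ((3:ℝ)/2)) 2, ← Real.rpow_mul (by norm_num)]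
    norm_num
  have hc3_sq : c3^2 = 3 * s := by
    rw [hc3def, ← Real.rpow_natCast ((3:ℝ) ^ ((3:ℝ)/4)) 2, ← Real.rpow_mul (by norm_num)]
    rw [show ((3:ℝ)/4 * ((2:ℕ):ℝ)) = 1 + 1/2 by push_cast; ring]
    rw [Real.rpow_add (by norm_num), Real.rpow_one, hsdef, Real.sqrt_eq_rpow]
  have hs_le : s ≤ 97/56 := by nlinarith [hs_sq, hs_pos]
  have hs_ge : (1:ℝ) ≤ s := by nlinarith [hs_sq, hs_pos]
  have e3 : s^3 = 3*s := by rw [pow_succ, hs_sq]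
  have hsqrtk_pos : 0 < Real.sqrt k :=
    Real.sqrt_pos.2 (by exact_mod_cast Nat.lt_of_lt_of_le (by norm_num) hk2)
  have hsqrtk_le : Real.sqrt k ≤ 8 := by
    rw [show (8:ℝ) = Real.sqrt 64 by
      rw [show (64:ℝ) = 8^2 by norm_num, Real.sqrt_sq (by norm_num)]]
    exact Real.sqrt_le_sqrt (by exact_mod_cast hk64)
  have h1 : 8*c3*(2-s) ≤ c2*s := by
    have ha : 0 ≤ 8*c3*(2-s) := by nlinarith
    have hb : 0 ≤ c2*s := by positivity
    apply le_of_sq_le_sq' hb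
    have e1 : (8*c3*(2-s))^2 = 64*(3*s)*(2-s)^2 := by rw [mul_pow, mul_pow, hc3_sq]; ring
    have e2 : (c2*s)^2 = 8*3 := by rw [mul_pow, hc2_sq, hs_sq]
    rw [e1, e2]
    nlinarith [hs_sq, hs_le, hs_ge, e3]
  have goal2 : 2/s - (c2/c3)/8 ≤ 1 := by
    have h2 : 2 - s ≤ (c2*s)/(c3*8) := by
      rw [le_div_iff₀ (by positivity)]
      nlinarith [h1]
    have e : c2/c3/8*s = (c2*s)/(c3*8) := by field_simp
    rw [sub_le_iff_le_add, div_le_iff₀ hs_pos, add_mul, one_mul, e]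
    linarith
  have hmono : (c2/c3)/8 ≤ (c2/c3)/Real.sqrt k := by
    gcongr
  linarith

lemma voronoi_bound (P : Set E2) (hfin : P.Finite) (hne : P.Nonempty)
    (r R : ℝ) (hr : 0 < r)
    (hsep : ∀ p ∈ P, ∀ q ∈ P, p ≠ q → 2*r ≤ dist p q)
    (hRub : ∀ x ∈ unitSquare, infDist x P ≤ R)
    (hR14 : R < 1/4)
    (p : E2) (hp : p ∈ P) (hpin : ∀ i, 1/4 ≤ p i ∧ p i ≤ 3/4) :
    4*r^2 ≤ 3*R^2 := by
  classical
  have hRnn : 0 ≤ R := le_trans infDist_nonneg (hRub p (fun i => by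
    have h := hpin i; constructor <;> linarith [h.1, h.2]))
  set K : Set E2 := {x : E2 | dist x p ≤ 1/4} ∩ ⋂ q ∈ P, {x : E2 | dist x p ≤ dist x q} with hK
  have memK : ∀ x : E2, x ∈ K ↔ dist x p ≤ 1/4 ∧ ∀ q ∈ P, dist x p ≤ dist x q := by
    intro x; simp [hK, Set.mem_iInter]
  have hKclosed : IsClosed K := by
    refine IsClosed.inter (isClosed_le (Continuous.dist continuous_id continuous_const)
      continuous_const) (isClosed_biInter fun q hq => isClosed_le
      (Continuous.dist continuous_id continuous_const)
      (Continuous.dist continuous_id continuous_const))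
  have hKsub : K ⊆ closedBall p (1/4) := fun x hx => Metric.mem_closedBall.2 ((memK x).1 hx).1
  have hKcpt : IsCompact K :=
    IsCompact.of_isClosed_subset (isCompact_closedBall p (1/4)) hKclosed hKsub
  have hball_sq : closedBall p (1/4) ⊆ unitSquare := by
    intro y hy i
    have h1 := abs_coord_le_dist y p i
    have h2 : dist y p ≤ 1/4 := Metric.mem_closedBall.1 hy
    have h3 := (hpin i).1; have h4 := (hpin i).2
    have h5 := abs_le.1 (le_trans h1 h2)
    constructor
    · linarith [h5.1]
    · linarith [h5.2]
  have hpK : p ∈ K := (memK p).2 ⟨by simp, fun q hq => by simp [dist_nonneg]⟩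
  obtain ⟨v, hvK, hvmax⟩ := hKcpt.exists_isMaxOn (f := fun x : E2 => dist x p) ⟨p, hpK⟩
    (Continuous.continuousOn (Continuous.dist continuous_id continuous_const))
  have hvb : dist v p ≤ 1/4 := ((memK v).1 hvK).1
  have hvq : ∀ q ∈ P, dist v p ≤ dist v q := ((memK v).1 hvK).2
  set d := dist v p with hd
  have hv_sq : v ∈ unitSquare := hball_sq (hKsub hvK)
  have hdR : d ≤ R := le_trans (le_infDist' hne hvq) (hRub v hv_sq)
  have hd14 : d < 1/4 := lt_of_le_of_lt hdR hR14
  have hrd : r ≤ d ∧ r < 1/4 := by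
    set ρ := min r (1/4) with hρ
    have hρpos : 0 < ρ := lt_min hr (by norm_num)
    set x₀ : E2 := p + EuclideanSpace.single 0 ρ with hx₀
    have hx₀p : dist x₀ p = ρ := by
      rw [dist_eq_norm, hx₀, add_sub_cancel_left, EuclideanSpace.norm_single,
        Real.norm_eq_abs, abs_of_pos hρpos]
    have hx₀K : x₀ ∈ K := by
      refine (memK x₀).2 ⟨by rw [hx₀p]; exact min_le_right _ _, fun q hq => ?_⟩
      by_cases hqp : q = p
      · subst hqp; exact le_rfl
      · have hsep' := hsep q hq p hp hqp
        have htri : dist q p ≤ dist q x₀ + dist x₀ p := dist_triangle q x₀ p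
        rw [hx₀p]
        have hρr : ρ ≤ r := min_le_left _ _
        rw [dist_comm q x₀] at htri
        linarith [hsep', htri]
    have hρd : ρ ≤ d := by simpa [hx₀p] using hvmax hx₀K
    have hρ14 : ρ < 1/4 := lt_of_le_of_lt hρd hd14
    have hrlt : r < 1/4 := by
      rcases min_lt_iff.1 hρ14 with h | h
      · exact h
      · linarith
    rw [hρ, min_eq_left hrlt.le] at hρd
    exact ⟨hρd, hrlt⟩
  have hdpos : 0 < d := lt_of_lt_of_le hr hrd.1
  suffices hqq : ∃ q1, q1 ∈ P ∧ ∃ q2, q2 ∈ P ∧ q1 ≠ p ∧ q2 ≠ p ∧ q1 ≠ q2 ∧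
      dist v q1 = d ∧ dist v q2 = d by
    obtain ⟨q1, hq1P, q2, hq2P, hq1p, hq2p, hq12, hq1d, hq2d⟩ := hqq
    have h3 := three_on_sphere (v := v) (a := p) (b := q1) (c := q2) rfl hq1d hq2d
      (hsep p hp q1 hq1P (Ne.symm hq1p)) (hsep p hp q2 hq2P (Ne.symm hq2p))
      (hsep q1 hq1P q2 hq2P hq12) hr.le
    have hsq : d^2 ≤ R^2 := pow_le_pow_left₀ hdpos.le hdR 2
    linarith
  by_contra hno
  push_neg at hno
  obtain ⟨b, hb0, hbA⟩ : ∃ b : E2, b ≠ 0 ∧ ∀ q ∈ P, q ≠ p → dist v q = d → q - p = b := by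
    by_cases hA : ∃ q ∈ P, q ≠ p ∧ dist v q = d
    · obtain ⟨q1, hq1P, hq1p, hq1d⟩ := hA
      refine ⟨q1 - p, sub_ne_zero.2 hq1p, fun q hq hqp hqd => ?_⟩
      by_cases hqq1 : q = q1
      · rw [hqq1]
      · exact absurd hq1d (hno q hq q1 hq1P hqp hq1p hqq1 hqd)
    · refine ⟨v - p, ?_, fun q hq hqp hqd => absurd ⟨q, hq, hqp, hqd⟩ hA⟩
      rw [sub_ne_zero]
      intro hvp
      rw [hd, hvp] at hdpos
      simp at hdpos
  set w : E2 := v - p with hwdef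
  have hw_norm : ‖w‖ = d := by rw [hwdef, ← dist_eq_norm]
  have hbb_pos : (0:ℝ) < ⟪b, b⟫ := by
    rw [real_inner_self_eq_norm_sq]; exact pow_pos (norm_pos_iff.2 hb0) 2
  obtain ⟨u, hu0, hub, huw⟩ : ∃ u : E2, u ≠ 0 ∧ ⟪u, b⟫ = 0 ∧ 0 ≤ ⟪w, u⟫ := by
    by_cases h0 : w - (⟪w, b⟫ / ⟪b, b⟫) • b = 0
    · have hw_eq : w = (⟪w, b⟫ / ⟪b, b⟫) • b := by rwa [sub_eq_zero] at h0
      refine ⟨(WithLp.equiv 2 (Fin 2 → ℝ)).symm ![-(b 1), b 0], ?_, ?_, ?_⟩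
      · intro hz
        apply hb0
        have h00 : ((WithLp.equiv 2 (Fin 2 → ℝ)).symm ![-(b 1), b 0]) 0 = 0 := by rw [hz]; rfl
        have h11 : ((WithLp.equiv 2 (Fin 2 → ℝ)).symm ![-(b 1), b 0]) 1 = 0 := by rw [hz]; rfl
        have e0 : -(b 1) = 0 := h00
        have e1 : b 0 = 0 := h11
        ext i
        fin_cases i
        · simpa using e1
        · simpa using (neg_eq_zero.1 e0)
      · rw [PiLp.inner_apply, Fin.sum_univ_two]
        have e0 : ((WithLp.equiv 2 (Fin 2 → ℝ)).symm ![-(b 1), b 0]) 0 = -(b 1) := rfl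
        have e1 : ((WithLp.equiv 2 (Fin 2 → ℝ)).symm ![-(b 1), b 0]) 1 = b 0 := rfl
        rw [e0, e1]
        simp [RCLike.inner_apply]
        ring
      · rw [hw_eq, real_inner_smul_left]
        have : ⟪b, (WithLp.equiv 2 (Fin 2 → ℝ)).symm ![-(b 1), b 0]⟫ = 0 := by
          rw [PiLp.inner_apply, Fin.sum_univ_two]
          have e0 : ((WithLp.equiv 2 (Fin 2 → ℝ)).symm ![-(b 1), b 0]) 0 = -(b 1) := rfl
          have e1 : ((WithLp.equiv 2 (Fin 2 → ℝ)).symm ![-(b 1), b 0]) 1 = b 0 := rfl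
          rw [e0, e1]
          simp [RCLike.inner_apply]
          ring
        rw [this]
        simp
    · refine ⟨w - (⟪w, b⟫ / ⟪b, b⟫) • b, h0, ?_, ?_⟩
      · rw [inner_sub_left, real_inner_smul_left, div_mul_cancel₀ _ (ne_of_gt hbb_pos), sub_self]
      · rw [inner_sub_right, real_inner_smul_right]
        have hcs := real_inner_mul_inner_self_le w b
        rw [sub_nonneg, div_mul_eq_mul_div, div_le_iff₀ hbb_pos]
        exact hcs
  have hunorm : 0 < ‖u‖ := norm_pos_iff.2 hu0
  set F := hfin.toFinset.filter (fun q => q ≠ p ∧ dist v q ≠ d) with hF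
  have hFd : ∀ q ∈ F, d < dist v q := by
    intro q hq
    rw [hF, Finset.mem_filter, Set.Finite.mem_toFinset] at hq
    exact lt_of_le_of_ne (hvq q hq.1) (Ne.symm hq.2.2)
  set δ := if hFne : F.Nonempty then F.inf' hFne (fun q => dist v q) - d else 1 with hδ
  have hδpos : 0 < δ := by
    rw [hδ]; split_ifs with hFne
    · obtain ⟨q₀, hq₀, heq⟩ := Finset.exists_mem_eq_inf' hFne (fun q => dist v q)
      rw [heq]; linarith [hFd q₀ hq₀]
    · norm_num
  have hδle : ∀ q ∈ F, d + δ ≤ dist v q := by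
    intro q hq
    rw [hδ, dif_pos ⟨q, hq⟩]
    linarith [Finset.inf'_le (fun q => dist v q) hq]
  set ε := min (1/4 - d) δ / (2 * ‖u‖) with hε
  have hεpos : 0 < ε := by
    apply div_pos (lt_min (by linarith) hδpos) (by positivity)
  have hεu : ε * ‖u‖ = min (1/4 - d) δ / 2 := by
    rw [hε]; field_simp
  have hεu1 : ε * ‖u‖ ≤ (1/4 - d)/2 := by
    rw [hεu]; gcongr; exact min_le_left _ _
  have hεu2 : ε * ‖u‖ ≤ δ/2 := by
    rw [hεu]; gcongr; exact min_le_right _ _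
  set x := v + ε • u with hx
  have hxv : dist x v = ε * ‖u‖ := by
    rw [hx, dist_eq_norm, add_sub_cancel_left, norm_smul, Real.norm_eq_abs, abs_of_pos hεpos]
  have hxsub : x - p = w + ε • u := by rw [hx, hwdef]; abel
  have hxpsq : ‖x - p‖^2 = d^2 + 2*(ε*⟪w, u⟫) + ε^2*‖u‖^2 := by
    rw [hxsub, norm_add_sq_real, hw_norm, real_inner_smul_right, norm_smul, Real.norm_eq_abs,
      abs_of_pos hεpos, mul_pow]
  have hgt : d < dist x p := by
    rw [dist_eq_norm]
    have h2 : d^2 < ‖x - p‖^2 := by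
      rw [hxpsq]
      nlinarith [mul_nonneg hεpos.le huw, mul_pos (pow_pos hεpos 2) (pow_pos hunorm 2)]
    exact lt_of_pow_lt_pow_left₀ 2 (norm_nonneg _) h2
  have hxp_le : dist x p ≤ d + ε*‖u‖ := by
    calc dist x p ≤ dist x v + dist v p := dist_triangle x v p
    _ = ε*‖u‖ + d := by rw [hxv]
    _ = d + ε*‖u‖ := by ring
  have hxK : x ∈ K := by
    refine (memK x).2 ⟨by linarith [hxp_le, hεu1, hd14], fun q hq => ?_⟩
    by_cases hqp : q = p
    · subst hqp; exact le_rfl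
    by_cases hqd : dist v q = d
    · have hb_eq : q - p = b := hbA q hq hqp hqd
      have hxq : x - q = w - b + ε • u := by
        rw [hx, hwdef, ← hb_eq]; abel
      have hnq : ‖w - b‖ = d := by
        have hwb : w - b = v - q := by rw [hwdef, ← hb_eq]; abel
        rw [hwb, ← dist_eq_norm, hqd]
      have hbu : ⟪b, u⟫ = (0:ℝ) := by rw [real_inner_comm]; exact hub
      have hinner : ⟪w - b, u⟫ = ⟪w, u⟫ := by
        rw [inner_sub_left, hbu, sub_zero]
      have hxqsq : ‖x - q‖^2 = d^2 + 2*(ε*⟪w, u⟫) + ε^2*‖u‖^2 := by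
        rw [hxq, norm_add_sq_real, hnq, real_inner_smul_right, hinner, norm_smul,
          Real.norm_eq_abs, abs_of_pos hεpos, mul_pow]
      have hsqle : dist x p ^ 2 ≤ dist x q ^ 2 := by
        rw [dist_eq_norm, dist_eq_norm, hxpsq, hxqsq]
      calc dist x p = Real.sqrt (dist x p ^ 2) := (Real.sqrt_sq dist_nonneg).symm
        _ ≤ Real.sqrt (dist x q ^2) := Real.sqrt_le_sqrt hsqle
        _ = dist x q := Real.sqrt_sq dist_nonneg
    · have hqF : q ∈ F := by
        rw [hF, Finset.mem_filter, Set.Finite.mem_toFinset]; exact ⟨hq, hqp, hqd⟩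
      have h1 := hδle q hqF
      have htri : dist v q ≤ dist v x + dist x q := dist_triangle v x q
      rw [dist_comm v x, hxv] at htri
      linarith [hxp_le, hεu2]
  exact absurd (hvmax hxK) (not_le.2 hgt)

/-- Lower bound on the gap ratio of a set of `k ≥ 2` points in the unit square:
`GR_P ≥ 2/√3 − C/√k` with `C = 2^{3/2}/3^{3/4}`. -/
theorem stmt1 (k : ℕ) (hk : 2 ≤ k) (P : Set (EuclideanSpace ℝ (Fin 2)))
    (hsub : P ⊆ unitSquare) (hcard : P.ncard = k) :
    2 / Real.sqrt 3 - ((2:ℝ) ^ ((3:ℝ)/2) / (3:ℝ) ^ ((3:ℝ)/4)) / Real.sqrt k ≤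
      gapRatio unitSquare P := by
  classical
  have hPfin : P.Finite := by
    by_contra h
    have h0 : P.ncard = 0 := Set.Infinite.ncard h
    omega
  obtain ⟨a0, ha0, b0, hb0, hab0⟩ := (Set.one_lt_ncard hPfin).1 (by omega)
  have hPne : P.Nonempty := ⟨a0, ha0⟩
  set S : Set ℝ := {d : ℝ | ∃ p ∈ P, ∃ q ∈ P, p ≠ q ∧ d = dist p q} with hS
  have hSfin : S.Finite := by
    apply Set.Finite.subset ((hPfin.prod hPfin).image (fun z : E2 × E2 => dist z.1 z.2))
    rintro d ⟨p, hp, q, hq, hne, rfl⟩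
    exact ⟨(p, q), ⟨hp, hq⟩, rfl⟩
  have hSne : S.Nonempty := ⟨dist a0 b0, a0, ha0, b0, hb0, hab0, rfl⟩
  have hminEq : minGap P = sInf S / 2 := rfl
  obtain ⟨p₀, hp₀, q₀, hq₀, hpq₀, heq₀⟩ := hSne.csInf_mem hSfin
  have hrpos : 0 < minGap P := by
    rw [hminEq]
    have h0 : 0 < sInf S := by rw [heq₀]; exact dist_pos.2 hpq₀
    linarith
  have hsep : ∀ p ∈ P, ∀ q ∈ P, p ≠ q → 2 * minGap P ≤ dist p q := by
    intro p hp q hq hne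
    have hle : sInf S ≤ dist p q := csInf_le hSfin.bddBelow ⟨p, hp, q, hq, hne, rfl⟩
    rw [hminEq]; linarith
  have hRub : ∀ x ∈ unitSquare, infDist x P ≤ maxGap unitSquare P := by
    intro x hx
    apply le_csSup
    · refine ⟨2, ?_⟩
      rintro y ⟨z, hz, rfl⟩
      exact le_trans (infDist_le_dist_of_mem ha0) (dist_le_two hz (hsub ha0))
    · exact ⟨x, hx, rfl⟩
  have hR0 : 0 ≤ maxGap unitSquare P :=
    le_trans infDist_nonneg (hRub a0 (hsub ha0))
  have hs3pos : 0 < Real.sqrt 3 := Real.sqrt_pos.2 (by norm_num)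
  have hs3sq : Real.sqrt 3 ^ 2 = 3 := Real.sq_sqrt (by norm_num)
  have hskpos : 0 < Real.sqrt k :=
    Real.sqrt_pos.2 (by exact_mod_cast Nat.lt_of_lt_of_le (by norm_num) hk)
  have hCpos : 0 < (2:ℝ) ^ ((3:ℝ)/2) / (3:ℝ) ^ ((3:ℝ)/4) :=
    div_pos (Real.rpow_pos_of_pos (by norm_num) _) (Real.rpow_pos_of_pos (by norm_num) _)
  have hLHS2 : 2 / Real.sqrt 3 - ((2:ℝ) ^ ((3:ℝ)/2) / (3:ℝ) ^ ((3:ℝ)/4)) / Real.sqrt k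
      ≤ 2 / Real.sqrt 3 := by
    have h0 : 0 ≤ ((2:ℝ) ^ ((3:ℝ)/2) / (3:ℝ) ^ ((3:ℝ)/4)) / Real.sqrt k := by positivity
    linarith
  show _ ≤ maxGap unitSquare P / minGap P
  rw [le_div_iff₀ hrpos]
  by_cases hk64 : k ≤ 64
  · -- use R ≥ minGap via midpoint of closest pair
    have hd0 : dist p₀ q₀ = 2 * minGap P := by rw [hminEq, ← heq₀]; ring
    set m : E2 := (1/2 : ℝ) • (p₀ + q₀) with hm
    have hmc : ∀ i, m i = (p₀ i + q₀ i)/2 := by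
      intro i; rw [hm]; simp [PiLp.smul_apply, PiLp.add_apply]; ring
    have hmsq : m ∈ unitSquare := by
      intro i
      have h1 := (hsub hp₀) i; have h2 := (hsub hq₀) i
      simp only [Set.mem_Icc] at h1 h2 ⊢
      rw [hmc i]
      constructor
      · linarith [h1.1, h2.1]
      · linarith [h1.2, h2.2]
    have hmp : dist m p₀ = minGap P := by
      have hsub' : m - p₀ = (1/2 : ℝ) • (q₀ - p₀) := by rw [hm]; module
      rw [dist_eq_norm, hsub', norm_smul, Real.norm_eq_abs,
        abs_of_pos (by norm_num : (0:ℝ) < 1/2), ← dist_eq_norm, dist_comm q₀ p₀, hd0]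
      ring
    have hmq : dist m q₀ = minGap P := by
      have hsub' : m - q₀ = (1/2 : ℝ) • (p₀ - q₀) := by rw [hm]; module
      rw [dist_eq_norm, hsub', norm_smul, Real.norm_eq_abs,
        abs_of_pos (by norm_num : (0:ℝ) < 1/2), ← dist_eq_norm, hd0]
      ring
    have hinf : minGap P ≤ infDist m P := by
      apply le_infDist' hPne
      intro y hy
      by_cases hyp : y = p₀
      · rw [hyp]; exact le_of_eq hmp.symm
      by_cases hyq : y = q₀
      · rw [hyq]; exact le_of_eq hmq.symm
      have h2r := hsep y hy p₀ hp₀ hyp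
      have htri : dist y p₀ ≤ dist y m + dist m p₀ := dist_triangle _ _ _
      rw [dist_comm y m] at htri
      rw [hmp] at htri
      linarith
    calc (2 / Real.sqrt 3 - ((2:ℝ) ^ ((3:ℝ)/2) / (3:ℝ) ^ ((3:ℝ)/4)) / Real.sqrt k) * minGap P
        ≤ 1 * minGap P := mul_le_mul_of_nonneg_right (key64 hk hk64) hrpos.le
      _ = minGap P := one_mul _
      _ ≤ infDist m P := hinf
      _ ≤ maxGap unitSquare P := hRub m hmsq
  · have hk65 : 65 ≤ P.ncard := by omega
    obtain ⟨p₁, hp₁, q₁, hq₁, hpq₁, hd₁⟩ := small_gap P hPfin hsub hk65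
    have hr128 : (minGap P)^2 ≤ 1/128 := by
      have h2g := hsep p₁ hp₁ q₁ hq₁ hpq₁
      have hsq2 : (2*minGap P)^2 ≤ (dist p₁ q₁)^2 :=
        pow_le_pow_left₀ (by positivity) h2g 2
      nlinarith
    by_cases hR14 : maxGap unitSquare P < 1/4
    · have hex : ∃ p ∈ P, ∀ i, 1/4 ≤ p i ∧ p i ≤ 3/4 := by
        by_contra hno
        push_neg at hno
        set z : E2 := (WithLp.equiv 2 (Fin 2 → ℝ)).symm ![1/2, 1/2] with hz
        have hzc : ∀ i, z i = 1/2 := by intro i; fin_cases i <;> rfl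
        have hzsq : z ∈ unitSquare := by
          intro i; rw [hzc i]; constructor <;> norm_num
        have hzd : ∀ y ∈ P, (1/4 : ℝ) ≤ dist z y := by
          intro y hy
          obtain ⟨i, hi⟩ := hno y hy
          have habs := abs_coord_le_dist z y i
          rw [hzc i] at habs
          by_cases h14 : 1/4 ≤ y i
          · have h34 := hi h14
            have : (1/4:ℝ) ≤ |1/2 - y i| := le_abs.2 (Or.inr (by linarith))
            linarith
          · have : (1/4:ℝ) ≤ |1/2 - y i| := le_abs.2 (Or.inl (by linarith [not_le.1 h14]))
            linarith
        have hzi : (1/4:ℝ) ≤ infDist z P := le_infDist' hPne hzd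
        linarith [hRub z hzsq]
      obtain ⟨p, hpP, hpin⟩ := hex
      have hvb := voronoi_bound P hPfin hPne (minGap P) (maxGap unitSquare P) hrpos hsep
        hRub hR14 p hpP hpin
      have h2r : 2 * minGap P ≤ Real.sqrt 3 * maxGap unitSquare P := by
        apply le_of_sq_le_sq' (by positivity)
        rw [mul_pow, mul_pow, hs3sq]
        linarith
      calc (2 / Real.sqrt 3 - ((2:ℝ) ^ ((3:ℝ)/2) / (3:ℝ) ^ ((3:ℝ)/4)) / Real.sqrt k) * minGap P
          ≤ (2 / Real.sqrt 3) * minGap P := mul_le_mul_of_nonneg_right hLHS2 hrpos.le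
        _ ≤ maxGap unitSquare P := by
            rw [div_mul_eq_mul_div, div_le_iff₀ hs3pos]
            linarith [h2r]
    · push_neg at hR14
      have h2r : 2 / Real.sqrt 3 * minGap P ≤ 1/4 := by
        rw [div_mul_eq_mul_div, div_le_iff₀ hs3pos]
        apply le_of_sq_le_sq' (by positivity)
        rw [mul_pow, mul_pow, hs3sq]
        nlinarith
      calc (2 / Real.sqrt 3 - ((2:ℝ) ^ ((3:ℝ)/2) / (3:ℝ) ^ ((3:ℝ)/4)) / Real.sqrt k) * minGap P
          ≤ (2 / Real.sqrt 3) * minGap P := mul_le_mul_of_nonneg_right hLHS2 hrpos.le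
        _ ≤ 1/4 := h2r
        _ ≤ maxGap unitSquare P := hR14
end

section
/- Let (M, δ) be a finite (or compact) metric space with at least k ≥ 2 points, and let q_1, …, q_k be a farthest-point-insertion sequence with S_i = {q_1, …, q_i} and S_1 = {q_1}. Then R_{S_i} ≤ R_{S_{i−1}} for each i ∈ {2, …, k}, and the gap ratio satisfies GR_{S_i} ≤ 2 for each i ∈ {2, …, k}. -/
open Metric

/-- The first `i` points of the sequence `q`. -/
def fpiPrefix {E : Type*} (q : ℕ → E) (i : ℕ) : Set E := q '' {j | j < i}

/-- `q` is a farthest-point-insertion sequence of length `k` in the space `X`: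
`q 0` and `q 1` realize the diameter of `X`, and each subsequent point is a
point of `X` farthest from the already chosen points. -/
def IsFPIOn {E : Type*} [MetricSpace E] (X : Set E) (k : ℕ) (q : ℕ → E) : Prop :=
  (∀ i < k, q i ∈ X) ∧
  dist (q 0) (q 1) = Metric.diam X ∧
  ∀ i, 2 ≤ i → i < k →
    Metric.infDist (q i) (fpiPrefix q i) = maxGap X (fpiPrefix q i)

section aux

variable {M : Type*} [MetricSpace M] [CompactSpace M]

lemma aux_bdd (P : Set M) :
    BddAbove ((fun x => Metric.infDist x P) '' Set.univ) := by
  refine ⟨diam (Set.univ : Set M), ?_⟩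
  rintro y ⟨x, -, rfl⟩
  rcases P.eq_empty_or_nonempty with rfl | ⟨p, hp⟩
  · simp [Metric.infDist_empty, diam_nonneg]
  · exact (Metric.infDist_le_dist_of_mem hp).trans
      (dist_le_diam_of_mem isCompact_univ.isBounded trivial trivial)

lemma infDist_le_maxGap (P : Set M) (x : M) :
    Metric.infDist x P ≤ maxGap Set.univ P :=
  le_csSup (aux_bdd P) ⟨x, trivial, rfl⟩

lemma maxGap_nonneg [Nonempty M] (P : Set M) : 0 ≤ maxGap Set.univ P := by
  rcases (inferInstance : Nonempty M) with ⟨x⟩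
  exact le_trans Metric.infDist_nonneg (infDist_le_maxGap P x)

lemma maxGap_anti [Nonempty M] {P P' : Set M} (h : P ⊆ P') (hP : P.Nonempty) :
    maxGap Set.univ P' ≤ maxGap Set.univ P := by
  refine Real.sSup_le ?_ (maxGap_nonneg P)
  rintro y ⟨x, -, rfl⟩
  exact (Metric.infDist_le_infDist_of_subset h hP).trans (infDist_le_maxGap P x)

lemma maxGap_le_diam {P : Set M} (hP : P.Nonempty) :
    maxGap Set.univ P ≤ diam (Set.univ : Set M) := by
  refine Real.sSup_le ?_ diam_nonneg
  rintro y ⟨x, -, rfl⟩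
  rcases hP with ⟨p, hp⟩
  exact (Metric.infDist_le_dist_of_mem hp).trans
    (dist_le_diam_of_mem isCompact_univ.isBounded trivial trivial)

end aux

lemma fpiPrefix_mono {E : Type*} (q : ℕ → E) {a b : ℕ} (h : a ≤ b) :
    fpiPrefix q a ⊆ fpiPrefix q b :=
  Set.image_mono fun _ hj => lt_of_lt_of_le hj h

/-- Along a farthest-point-insertion sequence in a compact metric space with at
least `k ≥ 2` points, the maximum gap is non-increasing and the gap ratio of each
prefix `S_i` (for `2 ≤ i ≤ k`) is at most `2`. -/
theorem stmt7 {M : Type*} [MetricSpace M] [CompactSpace M] (k : ℕ) (hk : 2 ≤ k)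
    (hpts : ∃ f : Fin k → M, Function.Injective f)
    (q : ℕ → M) (hq : IsFPIOn Set.univ k q) :
    ∀ i, 2 ≤ i → i ≤ k →
      maxGap Set.univ (fpiPrefix q i) ≤ maxGap Set.univ (fpiPrefix q (i-1)) ∧
      gapRatio Set.univ (fpiPrefix q i) ≤ 2 := by
  obtain ⟨-, hdiam, hfpi⟩ := hq
  obtain ⟨f, hf⟩ := hpts
  haveI : Nonempty M := ⟨f ⟨0, by omega⟩⟩
  have hm : ∀ i, ∀ j, j < i → q j ∈ fpiPrefix q i := fun i j hj => ⟨j, hj, rfl⟩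
  -- two distinct points
  have hne01 : q 0 ≠ q 1 := by
    intro h
    have h2 : f ⟨0, by omega⟩ ≠ f ⟨1, by omega⟩ := fun hh => by
      have := hf hh; simp at this
    have hd : (0:ℝ) < dist (f ⟨0, by omega⟩) (f ⟨1, by omega⟩) :=
      dist_pos.mpr h2
    have : dist (q 0) (q 1) = 0 := by simp [h]
    have hdle : dist (f ⟨0, by omega⟩) (f ⟨1, by omega⟩) ≤ diam (Set.univ : Set M) :=
      dist_le_diam_of_mem isCompact_univ.isBounded trivial trivial
    rw [hdiam] at this
    linarith
  have hne : ∀ i, 1 ≤ i → (fpiPrefix q i).Nonempty :=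
    fun i hi => ⟨q 0, 0, hi, rfl⟩
  -- key: maxGap (prefix i) ≤ dist (q a) (q b) for a < b < i ≤ k
  have hkey : ∀ i, 2 ≤ i → i ≤ k → ∀ a b, a < b → b < i →
      maxGap Set.univ (fpiPrefix q i) ≤ dist (q a) (q b) := by
    intro i hi2 hik a b hab hbi
    rcases lt_or_ge b 2 with hb | hb
    · -- b = 1, a = 0
      have hb1 : b = 1 := by omega
      have ha0 : a = 0 := by omega
      subst hb1; subst ha0
      rw [hdiam]
      exact maxGap_le_diam (hne i (by omega))
    · have h1 : maxGap Set.univ (fpiPrefix q i) ≤ maxGap Set.univ (fpiPrefix q b) :=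
        maxGap_anti (fpiPrefix_mono q (by omega)) (hne b (by omega))
      have h2 := hfpi b hb (by omega)
      have h3 : Metric.infDist (q b) (fpiPrefix q b) ≤ dist (q b) (q a) :=
        Metric.infDist_le_dist_of_mem ⟨a, hab, rfl⟩
      rw [dist_comm]
      linarith
  intro i hi2 hik
  constructor
  · exact maxGap_anti (fpiPrefix_mono q (by omega)) (hne (i-1) (by omega))
  · -- gap ratio
    set S := {d : ℝ | ∃ p ∈ fpiPrefix q i, ∃ r ∈ fpiPrefix q i, p ≠ r ∧ d = dist p r}
    have hSne : S.Nonempty := by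
      exact ⟨dist (q 0) (q 1), q 0, hm i 0 (by omega), q 1, hm i 1 (by omega), hne01, rfl⟩
    have hlb : maxGap Set.univ (fpiPrefix q i) ≤ sInf S := by
      refine le_csInf hSne ?_
      rintro d ⟨p, ⟨a, ha, rfl⟩, r, ⟨b, hb, rfl⟩, hpr, rfl⟩
      have hab : a ≠ b := fun h => hpr (by rw [h])
      rcases lt_or_gt_of_ne hab with h | h
      · exact hkey i hi2 hik a b h hb
      · rw [dist_comm]; exact hkey i hi2 hik b a h ha
    have hmg : maxGap Set.univ (fpiPrefix q i) ≤ 2 * minGap (fpiPrefix q i) := by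
      unfold minGap
      rw [mul_div_cancel₀]
      · exact hlb
      · norm_num
    have hmgnn : 0 ≤ minGap (fpiPrefix q i) := by
      have := maxGap_nonneg (P := fpiPrefix q i)
      nlinarith
    unfold gapRatio
    rcases eq_or_lt_of_le hmgnn with h0 | h0
    · rw [← h0, div_zero]; norm_num
    · rw [div_le_iff₀ h0]; linarith
end

section
/- Let (M, δ) be a finite (or compact) metric space with at least k ≥ 2 points, let q_1, …, q_k be a farthest-point-insertion sequence with S_i = {q_1, …, q_i}, and let P = {p_1, …, p_k} ⊆ M be a k-point subset whose gap ratio α = GR_P satisfies α < 2/3, with minimum gap r_P. Then for all i ∈ {2, …, k}, 2·r_{S_i} ≥ (2 − α)·r_P. -/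
open Metric

/-- If `P` is a `k`-point subset with gap ratio `α < 2/3` and minimum gap `r_P`,
then along a farthest-point-insertion sequence every prefix `S_i` (`2 ≤ i ≤ k`)
satisfies `2·r_{S_i} ≥ (2 − α)·r_P`. -/
theorem stmt9 {M : Type*} [MetricSpace M] [CompactSpace M] (k : ℕ) (hk : 2 ≤ k)
    (hpts : ∃ f : Fin k → M, Function.Injective f)
    (q : ℕ → M) (hq : IsFPIOn Set.univ k q)
    (P : Set M) (hP : P.ncard = k)
    (α : ℝ) (hα : α = gapRatio Set.univ P) (hα23 : α < 2/3) :
    ∀ i, 2 ≤ i → i ≤ k →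
      (2 - α) * minGap P ≤ 2 * minGap (fpiPrefix q i) := by

  classical
  obtain ⟨hqmem, hq01, hqstep⟩ := hq
  obtain ⟨f, hf⟩ := hpts
  have hM : Nonempty M := ⟨f ⟨0, by omega⟩⟩
  -- P is finite
  have hPfin : P.Finite := by
    by_contra h
    have := Set.Infinite.ncard h
    omega
  set rP := minGap P with hrP
  set R := maxGap Set.univ P with hR
  -- the pairwise distance set of P
  set DP : Set ℝ := {d : ℝ | ∃ p ∈ P, ∃ q ∈ P, p ≠ q ∧ d = dist p q} with hDP
  have hDPbdd : BddBelow DP := ⟨0, by rintro d ⟨p, _, q, _, _, rfl⟩; exact dist_nonneg⟩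
  have hDPfin : DP.Finite := by
    have : DP ⊆ (fun x : M × M => dist x.1 x.2) '' (P ×ˢ P) := by
      rintro d ⟨p, hp, q, hq, _, rfl⟩
      exact ⟨(p, q), ⟨hp, hq⟩, rfl⟩
    exact Set.Finite.subset ((hPfin.prod hPfin).image _) this
  have hPne2 : ∃ a ∈ P, ∃ b ∈ P, a ≠ b :=
    (Set.one_lt_ncard hPfin).mp (by omega)
  obtain ⟨p₀, hp₀, p₁, hp₁, hp01⟩ := hPne2
  have hDPne : DP.Nonempty := ⟨dist p₀ p₁, p₀, hp₀, p₁, hp₁, hp01, rfl⟩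
  have h2rP : 2 * rP = sInf DP := by
    rw [hrP]; unfold minGap; ring
  have hrPpos : 0 < rP := by
    have hmem : sInf DP ∈ DP := hDPne.csInf_mem hDPfin
    obtain ⟨p, _, q', _, hne, heq⟩ := hmem
    have : 0 < sInf DP := heq ▸ dist_pos.mpr hne
    linarith
  have hpair : ∀ a ∈ P, ∀ b ∈ P, a ≠ b → 2 * rP ≤ dist a b := by
    intro a ha b hb hab
    rw [h2rP]
    exact csInf_le hDPbdd ⟨a, ha, b, hb, hab, rfl⟩
  -- bddAbove of infDist images
  have hbdd : ∀ S : Set M, BddAbove ((fun x => Metric.infDist x S) '' Set.univ) :=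
    fun S => (isCompact_univ.image (continuous_infDist_pt S)).bddAbove
  have hle_maxGap : ∀ (S : Set M) (x : M), Metric.infDist x S ≤ maxGap Set.univ S := by
    intro S x
    exact le_csSup (hbdd S) ⟨x, trivial, rfl⟩
  have hRnonneg : 0 ≤ R := le_trans Metric.infDist_nonneg (hle_maxGap P hM.some)
  have hαnonneg : 0 ≤ α := by
    rw [hα]; unfold gapRatio
    exact div_nonneg hRnonneg (by linarith [hrPpos] : (0:ℝ) ≤ minGap P)
  have hαr : α * rP = R := by
    rw [hα]; unfold gapRatio
    field_simp
    rw [← hrP, mul_div_assoc, div_self hrPpos.ne', mul_one, hR]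
  -- every point is within α * rP of P
  have hnear : ∀ s : M, ∃ p ∈ P, dist s p ≤ α * rP := by
    intro s
    obtain ⟨p, hp, hpd⟩ := (hPfin.isCompact).exists_infDist_eq_dist
      ⟨p₀, hp₀⟩ s
    exact ⟨p, hp, by rw [← hpd, hαr]; exact hle_maxGap P s⟩
  choose g hgP hgd using hnear
  -- key lemma
  have key : ∀ S : Set M, S.Finite → S.Nonempty → S.ncard < k →
      (2 - α) * rP ≤ maxGap Set.univ S := by
    intro S hSfin hSne hScard
    obtain ⟨pstar, hpstar, hpnot⟩ : ∃ p ∈ P, p ∉ g '' S := by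
      by_contra h
      push_neg at h
      have hsub : P ⊆ g '' S := fun p hp => h p hp
      have := Set.ncard_le_ncard hsub (hSfin.image g)
      have := Set.ncard_image_le (f := g) hSfin
      omega
    obtain ⟨s, hs, hsd⟩ := hSfin.isCompact.exists_infDist_eq_dist hSne pstar
    have h1 : 2 * rP ≤ dist (g s) pstar := by
      refine hpair _ (hgP s) _ hpstar ?_
      rintro rfl
      exact hpnot ⟨s, hs, rfl⟩
    have h2 : dist (g s) pstar ≤ dist (g s) s + dist s pstar := dist_triangle _ _ _
    have h3 : (2 - α) * rP ≤ dist pstar s := by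
      have h4 := hgd s
      have h5 : dist s (g s) = dist (g s) s := dist_comm _ _
      have h6 : dist s pstar = dist pstar s := dist_comm _ _
      nlinarith
    calc (2 - α) * rP ≤ dist pstar s := h3
      _ = Metric.infDist pstar S := hsd.symm
      _ ≤ maxGap Set.univ S := hle_maxGap S pstar
  -- prefixes are finite with small ncard
  have hprefin : ∀ l : ℕ, (fpiPrefix q l).Finite := by
    intro l
    exact (Set.finite_Iio l).image q
  have hprecard : ∀ l : ℕ, (fpiPrefix q l).ncard ≤ l := by
    intro l
    have h1 : ({j : ℕ | j < l} : Set ℕ) = ↑(Finset.range l) := by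
      ext j; simp
    calc (fpiPrefix q l).ncard ≤ ({j : ℕ | j < l} : Set ℕ).ncard :=
          Set.ncard_image_le (Set.finite_Iio l)
      _ = l := by rw [h1, Set.ncard_coe_finset, Finset.card_range]
  -- q 0 ≠ q 1
  have hdiam : 2 * rP ≤ dist (q 0) (q 1) := by
    rw [hq01]
    calc 2 * rP ≤ dist p₀ p₁ := hpair _ hp₀ _ hp₁ hp01
      _ ≤ Metric.diam (Set.univ : Set M) :=
          Metric.dist_le_diam_of_mem isCompact_univ.isBounded trivial trivial
  have hne01 : q 0 ≠ q 1 := by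
    intro h
    rw [h, dist_self] at hdiam
    linarith
  -- main
  intro i hi2 hik
  -- the claim for ordered pairs
  have claim : ∀ j l : ℕ, j < l → l < i → (2 - α) * rP ≤ dist (q j) (q l) := by
    intro j l hjl hli
    rcases Nat.lt_or_ge l 2 with hl2 | hl2
    · -- l = 1, j = 0
      interval_cases l
      · omega
      · have hj0 : j = 0 := by omega
        subst hj0
        have : α * rP ≥ 0 := mul_nonneg hαnonneg hrPpos.le
        nlinarith [hdiam]
    · have hlk : l < k := by omega
      have hstep := hqstep l hl2 hlk
      have hmem : q j ∈ fpiPrefix q l := ⟨j, hjl, rfl⟩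
      have hne : (fpiPrefix q l).Nonempty := ⟨q j, hmem⟩
      have hcard : (fpiPrefix q l).ncard < k := lt_of_le_of_lt (hprecard l) hlk
      calc (2 - α) * rP ≤ maxGap Set.univ (fpiPrefix q l) :=
            key _ (hprefin l) hne hcard
        _ = Metric.infDist (q l) (fpiPrefix q l) := hstep.symm
        _ ≤ dist (q l) (q j) := Metric.infDist_le_dist_of_mem hmem
        _ = dist (q j) (q l) := dist_comm _ _
  -- pairwise distance set of the prefix
  have hbound : ∀ d ∈ {d : ℝ | ∃ a ∈ fpiPrefix q i, ∃ b ∈ fpiPrefix q i, a ≠ b ∧ d = dist a b},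
      (2 - α) * rP ≤ d := by
    rintro d ⟨a, ⟨j, hj, rfl⟩, b, ⟨l, hl, rfl⟩, hne, rfl⟩
    rcases lt_trichotomy j l with h | h | h
    · exact claim j l h hl
    · exact absurd (congrArg q h) hne
    · rw [dist_comm]
      exact claim l j h hj
  have hne' : {d : ℝ | ∃ a ∈ fpiPrefix q i, ∃ b ∈ fpiPrefix q i, a ≠ b ∧ d = dist a b}.Nonempty :=
    ⟨dist (q 0) (q 1), q 0, ⟨0, show 0 ∈ {j : ℕ | j < i} from by simp only [Set.mem_setOf_eq]; omega, rfl⟩,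
      q 1, ⟨1, show 1 ∈ {j : ℕ | j < i} from by simp only [Set.mem_setOf_eq]; omega, rfl⟩, hne01, rfl⟩
  have hfin : (2 - α) * rP ≤
      sInf {d : ℝ | ∃ a ∈ fpiPrefix q i, ∃ b ∈ fpiPrefix q i, a ≠ b ∧ d = dist a b} :=
    le_csInf hne' hbound
  show (2 - α) * rP ≤ 2 * minGap (fpiPrefix q i)
  unfold minGap
  linarith
end

section
/- Let (M, δ) be a finite metric space, let 2 ≤ k < |M|, and let R_OPT = min over all k-point subsets P of M of the maximum gap R_P^M. Let 0 < ε₁ < 1 and let C ⊆ M be such that every point of M is at distance at most ε₁·R_OPT from C. Then for every k-point subset P ⊆ C, (1 − ε₁)·R_P^M ≤ R_P^C; consequently GR_P^M ≤ (1 + ε₁/(1 − ε₁))·GR_P^C, i.e., C is a (k, ε₁/(1−ε₁))-coreset of M. -/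
open Metric

/-- Coreset property: if every point of a finite metric space `M` is within
distance `ε₁·R_OPT` of `C`, then for every `k`-point subset `P ⊆ C` we have
`(1 − ε₁)·R_P^M ≤ R_P^C`, and hence
`GR_P^M ≤ (1 + ε₁/(1−ε₁))·GR_P^C`. -/
theorem stmt11 {M : Type*} [MetricSpace M] [Finite M] (k : ℕ)
    (hk : 2 ≤ k) (hkM : k < Nat.card M)
    (ROPT : ℝ)
    (hROPT : ROPT = sInf {r : ℝ | ∃ P : Set M, P.ncard = k ∧ r = maxGap Set.univ P})
    (ε₁ : ℝ) (hε₁ : 0 < ε₁) (hε₁' : ε₁ < 1)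
    (C : Set M) (hC : ∀ x : M, Metric.infDist x C ≤ ε₁ * ROPT) :
    ∀ P : Set M, P ⊆ C → P.ncard = k →
      (1 - ε₁) * maxGap Set.univ P ≤ maxGap C P ∧
      gapRatio Set.univ P ≤ (1 + ε₁/(1-ε₁)) * gapRatio C P := by
  intro P hPC hPk
  have hPfin : P.Finite := Set.toFinite P
  have hPne : P.Nonempty := by
    apply Set.nonempty_of_ncard_ne_zero; omega
  have hCne : C.Nonempty := hPne.mono hPC
  -- finiteness of the relevant images
  have hSMfin : ((fun q => Metric.infDist q P) '' (Set.univ : Set M)).Finite :=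
    Set.finite_univ.image _
  have hSCfin : ((fun q => Metric.infDist q P) '' C).Finite := (Set.toFinite C).image _
  have hSMne : ((fun q => Metric.infDist q P) '' (Set.univ : Set M)).Nonempty := by
    obtain ⟨p, hp⟩ := hPne
    exact ⟨_, ⟨p, Set.mem_univ p, rfl⟩⟩
  -- every infDist is ≤ maxGap univ P
  have h1 : ∀ q : M, Metric.infDist q P ≤ maxGap Set.univ P := fun q =>
    le_csSup hSMfin.bddAbove ⟨q, Set.mem_univ q, rfl⟩
  -- maxGap univ is nonneg for any nonempty ambient
  have hmg0 : ∀ Q : Set M, 0 ≤ maxGap Set.univ Q := by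
    intro Q
    obtain ⟨p, _⟩ := hPne
    have : Metric.infDist p Q ≤ maxGap Set.univ Q :=
      le_csSup ((Set.finite_univ.image _).bddAbove) ⟨p, Set.mem_univ p, rfl⟩
    exact le_trans Metric.infDist_nonneg this
  -- ROPT ≤ maxGap univ P
  have hROPTle : ROPT ≤ maxGap Set.univ P := by
    rw [hROPT]
    apply csInf_le
    · refine ⟨0, ?_⟩
      rintro r ⟨P', _, rfl⟩
      exact hmg0 P'
    · exact ⟨P, hPk, rfl⟩
  -- key inequality
  have hkey : maxGap Set.univ P ≤ ε₁ * ROPT + maxGap C P := by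
    apply csSup_le hSMne
    rintro r ⟨q, -, rfl⟩
    obtain ⟨c, hcC, hqc⟩ := ((Set.toFinite C).isCompact).exists_infDist_eq_dist hCne q
    have h2 : Metric.infDist q P ≤ Metric.infDist c P + dist q c :=
      Metric.infDist_le_infDist_add_dist
    have h3 : dist q c ≤ ε₁ * ROPT := by rw [← hqc]; exact hC q
    have h4 : Metric.infDist c P ≤ maxGap C P :=
      le_csSup hSCfin.bddAbove ⟨c, hcC, rfl⟩
    dsimp only
    linarith
  have hmul : ε₁ * ROPT ≤ ε₁ * maxGap Set.univ P :=
    mul_le_mul_of_nonneg_left hROPTle hε₁.le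
  have hmain : (1 - ε₁) * maxGap Set.univ P ≤ maxGap C P := by linarith
  refine ⟨hmain, ?_⟩
  -- minGap positivity
  have hrpos : 0 < minGap P := by
    have h2 : 1 < P.ncard := by omega
    obtain ⟨x, y, hx, hy, hxy⟩ := (Set.one_lt_ncard_iff hPfin).mp h2
    set D : Set ℝ := {d : ℝ | ∃ p ∈ P, ∃ q ∈ P, p ≠ q ∧ d = dist p q} with hD
    have hDne : D.Nonempty := ⟨dist x y, x, hx, y, hy, hxy, rfl⟩
    have hDfin : D.Finite := by
      apply Set.Finite.subset (Set.finite_range (fun pq : M × M => dist pq.1 pq.2))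
      rintro d ⟨a, -, b, -, -, rfl⟩
      exact ⟨(a, b), rfl⟩
    have hmem : sInf D ∈ D := hDne.csInf_mem hDfin
    obtain ⟨a, -, b, -, hab, hEq⟩ := hmem
    have : 0 < sInf D := by rw [hEq]; exact dist_pos.mpr hab
    have : 0 < sInf D / 2 := by linarith
    exact this
  have ht : 0 < 1 - ε₁ := by linarith
  unfold gapRatio
  rw [← mul_div_assoc]
  apply div_le_div_of_nonneg_right ?_ hrpos.le
  have hco : 1 + ε₁ / (1 - ε₁) = 1 / (1 - ε₁) := by field_simp; ring
  rw [hco, one_div, inv_mul_eq_div, le_div_iff₀ ht]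
  nlinarith [hmain]
end

section
/- Let M be a finite set of at least k + 1 points in ℝ^d (k ≥ 2) with the Euclidean metric. Let α = min over all k-point subsets of M of the gap ratio (with maximum gap taken over M), and assume α ≤ 2. Let 0 < ε < 1/2 and ε₁ = ε/(3 + 2ε). Suppose P* = {p_1, …, p_k} ⊆ M attains gap ratio α with minimum gap r, and suppose Q = {q_1, …, q_k} ⊆ M satisfies ‖q_i − p_i‖ ≤ ε₁·α·r for each i. Then the points q_1, …, q_k are pairwise distinct and the gap ratio of Q over M satisfies GR_Q ≤ (1 + ε)·α. -/
open Metric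

lemma gapSet_finite {E : Type*} [MetricSpace E] {P : Set E} (hP : P.Finite) :
    {d : ℝ | ∃ a ∈ P, ∃ b ∈ P, a ≠ b ∧ d = dist a b}.Finite := by
  apply Set.Finite.subset (Set.Finite.image (fun x : E × E => dist x.1 x.2) (hP.prod hP))
  rintro d ⟨a, ha, b, hb, hab, rfl⟩
  exact ⟨(a, b), ⟨ha, hb⟩, rfl⟩

/-- Correctness of the grid-rounding step of the `(1+ε)`-approximation algorithm:
rounding an optimal `k`-point set `P*` to nearby points `q_i` (within `ε₁·α·r`)
yields pairwise distinct points whose gap ratio is at most `(1+ε)·α`. -/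
theorem stmt12 (d k : ℕ) (hk : 2 ≤ k)
    (M : Finset (EuclideanSpace ℝ (Fin d))) (hM : k + 1 ≤ M.card)
    (α : ℝ)
    (hα : α = sInf {g : ℝ | ∃ P : Set (EuclideanSpace ℝ (Fin d)),
        P ⊆ ↑M ∧ P.ncard = k ∧ g = gapRatio (↑M) P})
    (hα2 : α ≤ 2)
    (ε : ℝ) (hε : 0 < ε) (hε' : ε < 1/2)
    (ε₁ : ℝ) (hε₁ : ε₁ = ε / (3 + 2*ε))
    (p : Fin k → EuclideanSpace ℝ (Fin d)) (hpinj : Function.Injective p)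
    (hpM : ∀ i, p i ∈ M)
    (hopt : gapRatio (↑M) (Set.range p) = α)
    (r : ℝ) (hr : r = minGap (Set.range p))
    (q : Fin k → EuclideanSpace ℝ (Fin d)) (hqM : ∀ i, q i ∈ M)
    (hclose : ∀ i, dist (q i) (p i) ≤ ε₁ * α * r) :
    Function.Injective q ∧ gapRatio (↑M) (Set.range q) ≤ (1 + ε) * α := by
  classical
  clear hα
  have hε₁pos : 0 < ε₁ := by rw [hε₁]; positivity
  have hε₁lt : ε₁ < 1/6 := by
    rw [hε₁, div_lt_iff₀ (by linarith)]; linarith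
  set P : Set (EuclideanSpace ℝ (Fin d)) := Set.range p with hPdef
  set SP := {d : ℝ | ∃ a ∈ P, ∃ b ∈ P, a ≠ b ∧ d = dist a b} with hSPdef
  have hPfin : P.Finite := Set.finite_range p
  have hSPfin : SP.Finite := gapSet_finite hPfin
  have i0 : Fin k := ⟨0, by omega⟩
  have i1 : Fin k := ⟨1, by omega⟩
  have hi01 : (⟨0, by omega⟩ : Fin k) ≠ ⟨1, by omega⟩ := by
    intro h; simpa using congrArg Fin.val h
  have hSPne : SP.Nonempty :=
    ⟨dist (p ⟨0, by omega⟩) (p ⟨1, by omega⟩),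
      ⟨p ⟨0, by omega⟩, Set.mem_range_self _, p ⟨1, by omega⟩, Set.mem_range_self _,
        fun h => hi01 (hpinj h), rfl⟩⟩
  have hrval : r = sInf SP / 2 := hr
  have hrpos : 0 < r := by
    have hmem : sInf SP ∈ SP := Set.Nonempty.csInf_mem hSPne hSPfin
    obtain ⟨a, _, b, _, hab, hd⟩ := hmem
    have : 0 < sInf SP := hd ▸ dist_pos.mpr hab
    rw [hrval]; linarith
  have hdistp : ∀ i j : Fin k, i ≠ j → 2 * r ≤ dist (p i) (p j) := by
    intro i j hij
    have hmem : dist (p i) (p j) ∈ SP :=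
      ⟨p i, Set.mem_range_self _, p j, Set.mem_range_self _, fun h => hij (hpinj h), rfl⟩
    have := csInf_le hSPfin.bddBelow hmem
    rw [hrval]; linarith
  -- maxGap facts
  set R := maxGap (↑M) P with hRdef
  have hMne : (M : Set (EuclideanSpace ℝ (Fin d))).Nonempty := by
    have : 0 < M.card := by omega
    obtain ⟨x, hx⟩ := Finset.card_pos.mp this
    exact ⟨x, hx⟩
  have hTfin : ((fun x => infDist x P) '' ↑M).Finite :=
    Set.Finite.image _ (M.finite_toSet)
  have hTne : ((fun x => infDist x P) '' ↑M).Nonempty := hMne.image _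
  -- a point of M outside P
  obtain ⟨x₀, hx₀M, hx₀P⟩ : ∃ x ∈ M, x ∉ P := by
    by_contra h
    push_neg at h
    have hsub : M ⊆ Finset.image p Finset.univ := by
      intro x hx
      obtain ⟨i, hi⟩ := h x hx
      exact Finset.mem_image.mpr ⟨i, Finset.mem_univ _, hi⟩
    have := Finset.card_le_card hsub
    rw [Finset.card_image_of_injective _ hpinj, Finset.card_univ, Fintype.card_fin] at this
    omega
  have hRpos : 0 < R := by
    have h1 : 0 < infDist x₀ P := by
      rw [← hPfin.isClosed.notMem_iff_infDist_pos ⟨p ⟨0, by omega⟩, Set.mem_range_self _⟩]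
      exact hx₀P
    have h2 : infDist x₀ P ≤ R :=
      le_csSup hTfin.bddAbove ⟨x₀, hx₀M, rfl⟩
    linarith
  have hRαr : R = α * r := by
    have : R / r = α := by
      rw [← hopt]; simp only [gapRatio, hRdef, hr]
    rw [← this, div_mul_cancel₀ _ (ne_of_gt hrpos)]
  have hαpos : 0 < α := by
    nlinarith [hRpos, hrpos, hRαr]
  set δ := ε₁ * α * r with hδdef
  have hδpos : 0 < δ := by positivity
  have hδlt : δ < r / 3 := by
    have : δ ≤ 2 * ε₁ * r := by
      rw [hδdef]; nlinarith
    nlinarith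
  -- injectivity
  have hqinj : Function.Injective q := by
    intro i j hqij
    by_contra hij
    have h1 := hdistp i j hij
    have h2 : dist (p i) (p j) ≤ dist (p i) (q i) + dist (q i) (q j) + dist (q j) (p j) :=
      dist_triangle4 _ _ _ _
    have h3 : dist (p i) (q j) ≤ δ := by rw [← hqij, dist_comm]; exact hclose i
    have h4 : dist (q j) (p j) ≤ δ := hclose j
    rw [hqij, dist_self] at h2
    linarith
  refine ⟨hqinj, ?_⟩
  set Q : Set (EuclideanSpace ℝ (Fin d)) := Set.range q with hQdef
  set SQ := {d : ℝ | ∃ a ∈ Q, ∃ b ∈ Q, a ≠ b ∧ d = dist a b} with hSQdef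
  have hSQne : SQ.Nonempty :=
    ⟨dist (q ⟨0, by omega⟩) (q ⟨1, by omega⟩),
      ⟨q ⟨0, by omega⟩, Set.mem_range_self _, q ⟨1, by omega⟩, Set.mem_range_self _,
        fun h => hi01 (hqinj h), rfl⟩⟩
  have hminQ : r - δ ≤ minGap Q := by
    have h : 2 * (r - δ) ≤ sInf SQ := by
      apply le_csInf hSQne
      rintro b ⟨a, ⟨i, rfl⟩, c, ⟨j, rfl⟩, hac, rfl⟩
      have hij : i ≠ j := fun h => hac (by rw [h])
      have h1 := hdistp i j hij
      have h2 : dist (p i) (p j) ≤ dist (p i) (q i) + dist (q i) (q j) + dist (q j) (p j) :=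
        dist_triangle4 _ _ _ _
      have h3 : dist (p i) (q i) ≤ δ := by rw [dist_comm]; exact hclose i
      have h4 : dist (q j) (p j) ≤ δ := hclose j
      linarith
    show r - δ ≤ sInf SQ / 2
    linarith
  have hmaxQ : maxGap (↑M) Q ≤ R + δ := by
    apply csSup_le (hMne.image _)
    rintro b ⟨x, hx, rfl⟩
    obtain ⟨y, ⟨i, rfl⟩, hy⟩ :=
      (hPfin.isCompact).exists_infDist_eq_dist ⟨p ⟨0, by omega⟩, Set.mem_range_self _⟩ x
    have h1 : infDist x Q ≤ dist x (q i) := infDist_le_dist_of_mem (Set.mem_range_self _)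
    have h2 : dist x (q i) ≤ dist x (p i) + dist (p i) (q i) := dist_triangle _ _ _
    have h3 : dist (p i) (q i) ≤ δ := by rw [dist_comm]; exact hclose i
    have h4 : infDist x P ≤ R := le_csSup hTfin.bddAbove ⟨x, hx, rfl⟩
    rw [hy] at h4
    linarith
  have hrδ : 0 < r - δ := by linarith
  have hstep : gapRatio (↑M) Q ≤ (R + δ) / (r - δ) := by
    apply div_le_div₀ (by linarith) hmaxQ hrδ hminQ
  refine le_trans hstep ?_
  rw [div_le_iff₀ hrδ, hRαr, hδdef]
  have key : ε₁ * (3 + 2 * ε) = ε := by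
    rw [hε₁]; field_simp
  have h_ar : 0 ≤ α * r := by positivity
  have h_rest : 0 ≤ ε₁ * ((1 + ε) * (2 - α)) := by
    apply mul_nonneg hε₁pos.le
    apply mul_nonneg <;> linarith
  nlinarith [key, mul_nonneg h_ar h_rest]
end

section
/- Let q > l > 2 and k ≥ 2. Let D_1, …, D_k be closed disks of diameter 1 in ℝ² whose centers are pairwise at Euclidean distance at least l, fix an index i, and let M = ∂D_i ∪ ⋃_{j ≠ i} D_j (the i-th disk replaced by its bounding circle), with the metric induced from ℝ². If P ⊆ M has |P| = k and gap ratio GR_P ≤ 2/q, then the circle ∂D_i and each disk D_j (j ≠ i) contains exactly one point of P, and any two distinct points of P are at distance at least q. -/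
open Metric

lemma le_infDist_aux {E : Type*} [MetricSpace E] {s : Set E} (hs : s.Nonempty) {x : E} {b : ℝ}
    (h : ∀ y ∈ s, b ≤ dist x y) : b ≤ Metric.infDist x s := by
  by_contra hlt
  push_neg at hlt
  obtain ⟨y, hy, hd⟩ := (Metric.infDist_lt_iff hs).mp hlt
  exact absurd (h y hy) (not_le.mpr hd)

/-- If `q > l > 2`, the centers of `k` unit-diameter disks are pairwise at least `l`
apart, the `i`-th disk is replaced by its bounding circle, and a `k`-point set `P`
in the resulting space has gap ratio at most `2/q`, then the circle and each disk
contains exactly one point of `P` and any two distinct points of `P` are at distance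
at least `q`. -/
theorem stmt17 (q l : ℝ) (hl : 2 < l) (hql : l < q) (k : ℕ) (hk : 2 ≤ k)
    (c : Fin k → EuclideanSpace ℝ (Fin 2))
    (hcent : ∀ i j, i ≠ j → l ≤ dist (c i) (c j))
    (i : Fin k)
    (M : Set (EuclideanSpace ℝ (Fin 2)))
    (hM : M = Metric.sphere (c i) (1/2) ∪
      ⋃ j ∈ ({i}ᶜ : Set (Fin k)), Metric.closedBall (c j) (1/2))
    (P : Set (EuclideanSpace ℝ (Fin 2))) (hPM : P ⊆ M) (hPk : P.ncard = k)
    (hGR : gapRatio M P ≤ 2/q) :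
    (∃! p, p ∈ P ∧ p ∈ Metric.sphere (c i) (1/2)) ∧
    (∀ j, j ≠ i → ∃! p, p ∈ P ∧ p ∈ Metric.closedBall (c j) (1/2)) ∧
    (∀ p ∈ P, ∀ p' ∈ P, p ≠ p' → q ≤ dist p p') := by
  have hq2 : (2:ℝ) < q := lt_trans hl hql
  have hq0 : (0:ℝ) < q := by linarith
  -- P finite and nonempty
  have hPfin : P.Finite := by
    rcases P.finite_or_infinite with h | h
    · exact h
    · exfalso; rw [h.ncard] at hPk; omega
  have hPne : P.Nonempty := by
    apply Set.nonempty_of_ncard_ne_zero; omega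
  -- the distance set
  set D : Set ℝ := {d : ℝ | ∃ p ∈ P, ∃ q ∈ P, p ≠ q ∧ d = dist p q} with hD
  have hDfin : D.Finite := by
    apply ((hPfin.prod hPfin).image (fun x : _ × _ => dist x.1 x.2)).subset
    rintro d ⟨p, hp, q', hq', hne, rfl⟩
    exact ⟨(p, q'), ⟨hp, hq'⟩, rfl⟩
  have hDne : D.Nonempty := by
    have h1 : 1 < P.ncard := by omega
    rw [Set.one_lt_ncard hPfin] at h1
    obtain ⟨p, hp, q', hq', hne⟩ := h1
    exact ⟨dist p q', p, hp, q', hq', hne, rfl⟩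
  have hDbdd : BddBelow D := by
    refine ⟨0, ?_⟩
    rintro d ⟨p, hp, q', hq', hne, rfl⟩
    exact dist_nonneg
  have hDpos : 0 < sInf D := by
    have hmem := hDne.csInf_mem hDfin
    obtain ⟨p, hp, q', hq', hne, heq⟩ := hmem
    rw [heq]; exact dist_pos.mpr hne
  have hminGap : minGap P = sInf D / 2 := rfl
  -- separation of regions
  have hsep : ∀ j j', j ≠ j' → ∀ x ∈ closedBall (c j) (1/2 : ℝ),
      ∀ y ∈ closedBall (c j') (1/2 : ℝ), l - 1 ≤ dist x y := by
    intro j j' hjj x hx y hy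
    have h1 := hcent j j' hjj
    have h2 : dist (c j) (c j') ≤ dist (c j) x + dist x y + dist y (c j') :=
      dist_triangle4 _ _ _ _
    rw [mem_closedBall] at hx hy
    rw [dist_comm (c j) x] at h2
    linarith
  have hmemB : ∀ p ∈ P, ∃ j, p ∈ closedBall (c j) (1/2 : ℝ) := by
    intro p hp
    have hpM := hPM hp
    rw [hM] at hpM
    rcases hpM with h | h
    · exact ⟨i, sphere_subset_closedBall h⟩
    · simp only [Set.mem_iUnion] at h
      obtain ⟨j, _, hjb⟩ := h
      exact ⟨j, hjb⟩
  have huniq : ∀ p : EuclideanSpace ℝ (Fin 2), ∀ j j',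
      p ∈ closedBall (c j) (1/2 : ℝ) → p ∈ closedBall (c j') (1/2 : ℝ) → j = j' := by
    intro p j j' h h'
    by_contra hne
    have := hsep j j' hne p h p h'
    rw [dist_self] at this
    linarith
  -- choose region assignment
  have hex : ∀ p : P, ∃ j, (p : EuclideanSpace ℝ (Fin 2)) ∈ closedBall (c j) (1/2 : ℝ) :=
    fun p => hmemB p p.2
  choose g hg using hex
  have hgval : ∀ (p : P) j, (p : EuclideanSpace ℝ (Fin 2)) ∈ closedBall (c j) (1/2 : ℝ) →
      g p = j := fun p j h => huniq p _ _ (hg p) h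
  have hcard : Nat.card P = Nat.card (Fin k) := by
    rw [Nat.card_coe_set_eq, hPk, Nat.card_eq_fintype_card, Fintype.card_fin]
  -- boundedness of M and the image
  have hMbdd : Bornology.IsBounded M := by
    rw [hM]
    apply Bornology.IsBounded.union isBounded_sphere
    exact (Bornology.isBounded_biUnion (Set.toFinite _)).mpr
      (fun j _ => isBounded_closedBall)
  obtain ⟨p₀, hp₀⟩ := id hPne
  obtain ⟨R, hR⟩ := hMbdd.subset_closedBall p₀
  have hbdd : BddAbove ((fun q => infDist q P) '' M) := by
    refine ⟨R, ?_⟩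
    rintro x ⟨m', hm', rfl⟩
    exact le_trans (infDist_le_dist_of_mem hp₀) (hR hm')
  -- injectivity of g
  have hinj : Function.Injective g := by
    by_contra hninj
    rw [Function.not_injective_iff] at hninj
    obtain ⟨p, p', hgpp, hnepp⟩ := hninj
    -- minGap ≤ 1/2
    have h1 := hg p
    have h2 := hg p'
    rw [hgpp] at h1
    rw [mem_closedBall] at h1 h2
    have hd1 : dist (p : EuclideanSpace ℝ (Fin 2)) (p' : EuclideanSpace ℝ (Fin 2)) ≤ 1 := by
      have := dist_triangle (p : EuclideanSpace ℝ (Fin 2)) (c (g p')) (p' : EuclideanSpace ℝ (Fin 2))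
      rw [dist_comm (c (g p')) (p' : EuclideanSpace ℝ (Fin 2))] at this
      linarith
    have hvne : (p : EuclideanSpace ℝ (Fin 2)) ≠ (p' : EuclideanSpace ℝ (Fin 2)) :=
      fun h => hnepp (Subtype.ext h)
    have hmemD : dist (p : EuclideanSpace ℝ (Fin 2)) (p' : EuclideanSpace ℝ (Fin 2)) ∈ D :=
      ⟨p, p.2, p', p'.2, hvne, rfl⟩
    have hinf_le : sInf D ≤ 1 := le_trans (csInf_le hDbdd hmemD) hd1
    -- non-surjectivity gives an empty region
    haveI := hPfin.to_subtype
    have hnsurj : ¬ Function.Surjective g := by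
      intro hs
      have hbij := (Nat.bijective_iff_surjective_and_card g).mpr ⟨hs, hcard⟩
      exact hnepp (hbij.injective hgpp)
    simp only [Function.Surjective, not_forall] at hnsurj
    obtain ⟨j, hj⟩ := hnsurj
    push_neg at hj
    -- point m in empty region
    set v : EuclideanSpace ℝ (Fin 2) := EuclideanSpace.single (0 : Fin 2) (1/2 : ℝ) with hv
    set m : EuclideanSpace ℝ (Fin 2) := c j + v with hm
    have hvnorm : ‖v‖ = 1/2 := by
      rw [hv, EuclideanSpace.norm_single]
      norm_num
    have hmdist : dist m (c j) = 1/2 := by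
      rw [hm, dist_eq_norm, add_sub_cancel_left, hvnorm]
    have hmM : m ∈ M := by
      rw [hM]
      by_cases hji : j = i
      · subst hji; exact Or.inl (mem_sphere.mpr hmdist)
      · right
        simp only [Set.mem_iUnion]
        exact ⟨j, hji, by rw [mem_closedBall]; linarith [hmdist]⟩
    have hinfm : l - 1 ≤ infDist m P := by
      apply le_infDist_aux hPne
      intro p'' hp''
      have hgne : g ⟨p'', hp''⟩ ≠ j := hj ⟨p'', hp''⟩
      exact hsep j (g ⟨p'', hp''⟩) (Ne.symm hgne)
        m (by rw [mem_closedBall]; linarith [hmdist]) p'' (hg ⟨p'', hp''⟩)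
    have hmax : l - 1 ≤ maxGap M P :=
      le_trans hinfm (le_csSup hbdd ⟨m, hmM, rfl⟩)
    -- contradiction
    have hmpos : 0 < minGap P := by rw [hminGap]; linarith
    have hmle : minGap P ≤ 1/2 := by rw [hminGap]; linarith
    have hgr : (l - 1) / minGap P ≤ 2 / q := by
      calc (l - 1) / minGap P ≤ maxGap M P / minGap P := by
            gcongr
          _ ≤ 2 / q := hGR
    have h2q : 2 / q < 1 := by rw [div_lt_one hq0]; linarith
    have : l - 1 < minGap P := (div_lt_one hmpos).mp (lt_of_le_of_lt hgr h2q)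
    linarith
  haveI := hPfin.to_subtype
  have hbij : Function.Bijective g := (Nat.bijective_iff_injective_and_card g).mpr ⟨hinj, hcard⟩
  -- the point on the sphere
  obtain ⟨pi, hpi⟩ := hbij.2 i
  have hpiball : (pi : EuclideanSpace ℝ (Fin 2)) ∈ closedBall (c i) (1/2 : ℝ) := hpi ▸ hg pi
  have hpisphere : (pi : EuclideanSpace ℝ (Fin 2)) ∈ sphere (c i) (1/2 : ℝ) := by
    have hpM := hPM pi.2
    rw [hM] at hpM
    rcases hpM with h | h
    · exact h
    · exfalso
      simp only [Set.mem_iUnion] at h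
      obtain ⟨j, hji, hjb⟩ := h
      exact hji (huniq pi j i hjb hpiball)
  refine ⟨?_, ?_, ?_⟩
  · refine ⟨pi.1, ⟨pi.2, hpisphere⟩, ?_⟩
    rintro y ⟨hyP, hyS⟩
    have : g ⟨y, hyP⟩ = i := hgval ⟨y, hyP⟩ i (sphere_subset_closedBall hyS)
    have := hinj (this.trans hpi.symm)
    exact congrArg Subtype.val this
  · intro j hji
    obtain ⟨pj, hpj⟩ := hbij.2 j
    refine ⟨pj.1, ⟨pj.2, hpj ▸ hg pj⟩, ?_⟩
    rintro y ⟨hyP, hyB⟩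
    have : g ⟨y, hyP⟩ = j := hgval ⟨y, hyP⟩ j hyB
    have := hinj (this.trans hpj.symm)
    exact congrArg Subtype.val this
  · -- distance bound: first maxGap ≥ 1 via antipode
    intro p hp p' hp' hne
    set pc : EuclideanSpace ℝ (Fin 2) := pi.1 with hpc
    set m : EuclideanSpace ℝ (Fin 2) := c i + (c i - pc) with hm
    have hnormcp : ‖c i - pc‖ = 1/2 := by
      rw [← dist_eq_norm, dist_comm]
      exact mem_sphere.mp hpisphere
    have hmsphere : m ∈ sphere (c i) (1/2 : ℝ) := by
      rw [mem_sphere, hm, dist_eq_norm, add_sub_cancel_left, hnormcp]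
    have hmM : m ∈ M := by rw [hM]; left; exact hmsphere
    have hdistmp : dist m pc = 1 := by
      have heq : m - pc = (2:ℝ) • (c i - pc) := by
        rw [hm, two_smul]; abel
      rw [dist_eq_norm, heq, norm_smul, hnormcp]
      norm_num
    have hinfm : 1 ≤ infDist m P := by
      apply le_infDist_aux hPne
      intro p'' hp''
      by_cases hpe : p'' = pc
      · rw [hpe, hdistmp]
      · have hgne : g ⟨p'', hp''⟩ ≠ i := by
          intro h
          exact hpe (congrArg Subtype.val (hinj (h.trans hpi.symm)))
        have := hsep i (g ⟨p'', hp''⟩) (Ne.symm hgne) m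
          (sphere_subset_closedBall hmsphere) p'' (hg ⟨p'', hp''⟩)
        linarith
    have hmax : 1 ≤ maxGap M P := le_trans hinfm (le_csSup hbdd ⟨m, hmM, rfl⟩)
    have hmpos : 0 < minGap P := by rw [hminGap]; linarith
    have hgr : 1 / minGap P ≤ 2 / q := by
      calc 1 / minGap P ≤ maxGap M P / minGap P := by
            gcongr
          _ ≤ 2 / q := hGR
    have hqle : q ≤ 2 * minGap P := by
      rw [div_le_div_iff₀ hmpos hq0] at hgr
      linarith
    have hmemD : dist p p' ∈ D := ⟨p, hp, p', hp', hne, rfl⟩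
    have := csInf_le hDbdd hmemD
    rw [hminGap] at hqle
    linarith
end

section
/- Let P be a set of n ≥ 2 points in the unit square [0,1]² with minimum gap r = (1/2)·min{‖p − q‖ : p, q ∈ P, p ≠ q}. Let x, y ∈ (0, 1], write R_xy = [0,x] × [0,y] and k = |R_xy ∩ P|, and suppose k ≥ 2 and k/n ≥ xy. Then |xy − k/n| ≤ (x² + y²)/(r²·n) − xy. -/
open Metric

private lemma abs_sub_lt_of_floor_div_eq {a b s : ℝ} (hs : 0 < s) (h : ⌊a/s⌋ = ⌊b/s⌋) :
    |a - b| < s := by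
  have hc : ((⌊a/s⌋ : ℤ) : ℝ) = ((⌊b/s⌋ : ℤ) : ℝ) := by rw [h]
  have ha1 : ((⌊a/s⌋ : ℤ) : ℝ) * s ≤ a := by
    rw [← le_div_iff₀ hs]; exact Int.floor_le _
  have ha2 : a < (((⌊a/s⌋ : ℤ) : ℝ) + 1) * s := by
    rw [← div_lt_iff₀ hs]; exact Int.lt_floor_add_one _
  have hb1 : ((⌊b/s⌋ : ℤ) : ℝ) * s ≤ b := by
    rw [← le_div_iff₀ hs]; exact Int.floor_le _
  have hb2 : b < (((⌊b/s⌋ : ℤ) : ℝ) + 1) * s := by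
    rw [← div_lt_iff₀ hs]; exact Int.lt_floor_add_one _
  rw [abs_sub_lt_iff]
  constructor <;> nlinarith

private lemma dist_eq_two {p q : EuclideanSpace ℝ (Fin 2)} :
    dist p q = Real.sqrt ((p 0 - q 0)^2 + (p 1 - q 1)^2) := by
  rw [EuclideanSpace.dist_eq, Fin.sum_univ_two]
  simp [Real.dist_eq, sq_abs]


set_option maxHeartbeats 1000000 in
/-- Discrepancy upper bound from the minimum gap: for `n ≥ 2` points in the unit
square with minimum gap `r` and an anchored rectangle `[0,x]×[0,y]` containing
`k ≥ 2` of the points with `k/n ≥ xy`, the local star-discrepancy at `(x,y)` is at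
most `(x² + y²)/(r²·n) − xy`. -/
theorem stmt18 (P : Set (EuclideanSpace ℝ (Fin 2))) (hsub : P ⊆ unitSquare)
    (n : ℕ) (hn : P.ncard = n) (hn2 : 2 ≤ n)
    (x y : ℝ) (hx : x ∈ Set.Ioc (0:ℝ) 1) (hy : y ∈ Set.Ioc (0:ℝ) 1)
    (r : ℝ) (hr : r = minGap P)
    (k : ℕ)
    (hk : k = (P ∩ {p | p 0 ∈ Set.Icc 0 x ∧ p 1 ∈ Set.Icc 0 y}).ncard)
    (hk2 : 2 ≤ k) (hkn : x * y ≤ (k:ℝ)/n) :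
    |x*y - (k:ℝ)/n| ≤ (x^2 + y^2)/(r^2 * n) - x*y := by
  obtain ⟨hx0, hx1⟩ := hx
  obtain ⟨hy0, hy1⟩ := hy
  have hPfin : P.Finite := by
    rw [← Set.not_infinite]
    intro h
    rw [h.ncard] at hn; omega
  set S : Set (EuclideanSpace ℝ (Fin 2)) :=
    P ∩ {p | p 0 ∈ Set.Icc 0 x ∧ p 1 ∈ Set.Icc 0 y} with hS
  have hSfin : S.Finite := hPfin.inter_of_left _
  -- the set of pairwise distances
  set D : Set ℝ := {d : ℝ | ∃ p ∈ P, ∃ q ∈ P, p ≠ q ∧ d = dist p q} with hD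
  have hDfin : D.Finite := by
    have hsub' : D ⊆ (fun pq : EuclideanSpace ℝ (Fin 2) × EuclideanSpace ℝ (Fin 2) =>
        dist pq.1 pq.2) '' (P ×ˢ P) := by
      rintro d ⟨p, hp, q, hq, hne, rfl⟩
      exact ⟨(p, q), ⟨hp, hq⟩, rfl⟩
    exact ((hPfin.prod hPfin).image _).subset hsub'
  -- two distinct points of S
  obtain ⟨p, hp, q, hq, hpq⟩ : ∃ a ∈ S, ∃ b ∈ S, a ≠ b := by
    rw [← Set.one_lt_ncard hSfin, ← hk]; omega
  have hDne : D.Nonempty := ⟨dist p q, p, hp.1, q, hq.1, hpq, rfl⟩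
  have hr0 : 0 < r := by
    have hmem := hDne.csInf_mem hDfin
    obtain ⟨a, _, b, _, hab, heq⟩ := hmem
    rw [hr, minGap]
    have : 0 < dist a b := dist_pos.mpr hab
    have : 0 < sInf D := heq ▸ this
    linarith
  -- minimum distance bound
  have hmin : ∀ a ∈ P, ∀ b ∈ P, a ≠ b → 2 * r ≤ dist a b := by
    intro a ha b hb hab
    have : sInf D ≤ dist a b := csInf_le hDfin.bddBelow ⟨a, ha, b, hb, hab, rfl⟩
    rw [hr, minGap]; linarith
  -- 4 r^2 ≤ x^2 + y^2
  have h4 : 4 * r^2 ≤ x^2 + y^2 := by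
    have h1 : 2 * r ≤ dist p q := hmin p hp.1 q hq.1 hpq
    have h2 : dist p q ≤ Real.sqrt (x^2 + y^2) := by
      rw [dist_eq_two]
      apply Real.sqrt_le_sqrt
      have hpx := hp.2.1; have hqx := hq.2.1
      have hpy := hp.2.2; have hqy := hq.2.2
      simp only [Set.mem_Icc] at hpx hqx hpy hqy
      have e1 : (p 0 - q 0)^2 ≤ x^2 := by nlinarith [hpx.1, hpx.2, hqx.1, hqx.2]
      have e2 : (p 1 - q 1)^2 ≤ y^2 := by nlinarith [hpy.1, hpy.2, hqy.1, hqy.2]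
      linarith
    have h3 : 2 * r ≤ Real.sqrt (x^2 + y^2) := le_trans h1 h2
    have := (Real.le_sqrt (by linarith) (by positivity)).mp h3
    nlinarith
  -- grid argument
  set s0 : ℝ := Real.sqrt 2 * r with hs0def
  have hs0 : 0 < s0 := by positivity
  have hs0sq : s0^2 = 2 * r^2 := by
    rw [hs0def, mul_pow, Real.sq_sqrt (by norm_num : (2:ℝ) ≥ 0)]
  set f : EuclideanSpace ℝ (Fin 2) → ℤ × ℤ := fun p => (⌊p 0 / s0⌋, ⌊p 1 / s0⌋) with hf
  have hinj : Set.InjOn f S := by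
    intro a ha b hb hfeq
    by_contra hne
    have hd : 2 * r ≤ dist a b := hmin a ha.1 b hb.1 hne
    have h0 : |a 0 - b 0| < s0 := abs_sub_lt_of_floor_div_eq hs0 (congrArg Prod.fst hfeq)
    have h1 : |a 1 - b 1| < s0 := abs_sub_lt_of_floor_div_eq hs0 (congrArg Prod.snd hfeq)
    have hlt : dist a b < 2 * r := by
      rw [dist_eq_two]
      rw [Real.sqrt_lt' (by linarith)]
      have e0 : (a 0 - b 0)^2 < s0^2 := by
        have := abs_lt.mp h0
        exact sq_lt_sq' (by linarith) (by linarith)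
      have e1 : (a 1 - b 1)^2 < s0^2 := by
        have := abs_lt.mp h1
        exact sq_lt_sq' (by linarith) (by linarith)
      have hexp : (2*r)^2 = 4*r^2 := by ring
      linarith
    linarith
  set A : ℤ := ⌊x / s0⌋ with hA
  set B : ℤ := ⌊y / s0⌋ with hB
  have hA0 : 0 ≤ A := Int.floor_nonneg.mpr (div_nonneg hx0.le hs0.le)
  have hB0 : 0 ≤ B := Int.floor_nonneg.mpr (div_nonneg hy0.le hs0.le)
  have himg : f '' S ⊆ ↑(Finset.Icc (0:ℤ) A ×ˢ Finset.Icc (0:ℤ) B) := by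
    rintro _ ⟨a, ha, rfl⟩
    have hax := ha.2.1; have hay := ha.2.2
    simp only [Set.mem_Icc] at hax hay
    simp only [Finset.coe_product, Set.mem_prod, Finset.mem_coe, Finset.mem_Icc]
    refine ⟨⟨Int.floor_nonneg.mpr (div_nonneg hax.1 hs0.le), ?_⟩,
            ⟨Int.floor_nonneg.mpr (div_nonneg hay.1 hs0.le), ?_⟩⟩
    · exact Int.floor_le_floor (by gcongr; exact hax.2)
    · exact Int.floor_le_floor (by gcongr; exact hay.2)
  have hcount : k ≤ (A + 1).toNat * (B + 1).toNat := by
    have h1 : S.ncard = (f '' S).ncard := (Set.ncard_image_of_injOn hinj).symm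
    have h2 : (f '' S).ncard ≤ ((Finset.Icc (0:ℤ) A ×ˢ Finset.Icc (0:ℤ) B : Finset (ℤ × ℤ)) : Set (ℤ × ℤ)).ncard :=
      Set.ncard_le_ncard himg (Finset.finite_toSet _)
    rw [Set.ncard_coe_finset, Finset.card_product, Int.card_Icc, Int.card_Icc] at h2
    simp only [sub_zero] at h2
    omega
  -- real bound on k
  have hkreal : (k : ℝ) ≤ (x / s0 + 1) * (y / s0 + 1) := by
    have h1 : (k : ℝ) ≤ ((A + 1).toNat * (B + 1).toNat : ℕ) := by exact_mod_cast hcount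
    have eA : (((A + 1).toNat : ℕ) : ℝ) = (A : ℝ) + 1 := by
      rw [← Int.cast_natCast, Int.toNat_of_nonneg (by omega)]; push_cast; ring
    have eB : (((B + 1).toNat : ℕ) : ℝ) = (B : ℝ) + 1 := by
      rw [← Int.cast_natCast, Int.toNat_of_nonneg (by omega)]; push_cast; ring
    have h2 : (((A + 1).toNat * (B + 1).toNat : ℕ) : ℝ) = ((A:ℝ) + 1) * ((B:ℝ) + 1) := by
      rw [Nat.cast_mul, eA, eB]
    rw [h2] at h1
    have hAle : (A : ℝ) ≤ x / s0 := Int.floor_le _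
    have hBle : (B : ℝ) ≤ y / s0 := Int.floor_le _
    have hBnn : (0:ℝ) ≤ (B:ℝ) := by exact_mod_cast hB0
    calc (k:ℝ) ≤ ((A:ℝ)+1) * ((B:ℝ)+1) := h1
      _ ≤ (x/s0 + 1) * (y/s0 + 1) := by gcongr <;> linarith
  have hmain : (x / s0 + 1) * (y / s0 + 1) ≤ (x^2 + y^2) / r^2 := by
    have key : (x + s0) * (y + s0) * r^2 ≤ (x^2 + y^2) * s0^2 := by
      nlinarith [sq_nonneg (x - y), sq_nonneg (x + y - 2*s0), hs0.le, hr0.le]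
    have e : (x / s0 + 1) * (y / s0 + 1) = (x + s0) * (y + s0) / s0^2 := by
      field_simp
    rw [e, div_le_div_iff₀ (by positivity) (by positivity)]
    linarith
  have hkfin : (k : ℝ) ≤ (x^2 + y^2) / r^2 := le_trans hkreal hmain
  have hn0 : (0:ℝ) < n := by exact_mod_cast (by omega : 0 < n)
  have hdiv : (k : ℝ) / n ≤ (x^2 + y^2) / (r^2 * n) := by
    rw [← div_div]
    gcongr
  rw [abs_sub_comm, abs_of_nonneg (by linarith)]
  linarith
end
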